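/- For F(y) = α·y + β/y³ with y > 0 (case 3(b), sl(2,ℝ) symmetry), if y solves y'' + α y + β/y³ = 0, then the function K(t) = y(t)² satisfies the third-order linear equation K''' + 4α K' = 0. -/

import Mathlib

theorem ermakov_linear_third_order
    (α β : ℝ) (y : ℝ → ℝ)
    (hy : Differentiable ℝ y) (hy' : Differentiable ℝ (deriv y))
    (hy'' : Differentiable ℝ (deriv (deriv y)))
    (hpos : ∀ t, 0 < y t)
    (hode : ∀ t, deriv (deriv y) t + α * y t + β / (y t) ^ 3 = 0) :
    ∀ t, deriv (deriv (deriv (fun s => (y s) ^ 2))) t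
        + 4 * α * deriv (fun s => (y s) ^ 2) t = 0 := by
  have hne : ∀ t, y t ≠ 0 := fun t => (hpos t).ne'
  have hK1 : deriv (fun s => y s ^ 2) = fun s => 2 * y s * deriv y s := by
    funext s
    rw [deriv_fun_pow (hy s) 2]
    ring
  have hK2 : deriv (fun s => 2 * y s * deriv y s)
      = fun s => 2 * (deriv y s * deriv y s)
        + 2 * y s * (-(α * y s) - β / (y s) ^ 3) := by
    funext s
    have h : HasDerivAt (fun u => 2 * y u * deriv y u)
        (2 * deriv y s * deriv y s + 2 * y s * deriv (deriv y) s) s :=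
      ((hy s).hasDerivAt.const_mul 2).mul (hy' s).hasDerivAt
    rw [h.deriv]
    have hd : deriv (deriv y) s = -(α * y s) - β / (y s) ^ 3 := by
      have := hode s; linarith
    rw [hd]; ring
  intro t
  rw [hK1, hK2]
  set a := y t with ha
  set a' := deriv y t with ha'
  set b := deriv (deriv y) t with hb
  have hyt : HasDerivAt y a' t := (hy t).hasDerivAt
  have hy't : HasDerivAt (deriv y) b t := (hy' t).hasDerivAt
  have hcube : HasDerivAt (fun s => (y s) ^ 3) (3 * a ^ 2 * a') t := by
    simpa using hyt.fun_pow 3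
  have hdiv : HasDerivAt (fun s => β / (y s) ^ 3)
      ((0 * a ^ 3 - β * (3 * a ^ 2 * a')) / (a ^ 3) ^ 2) t :=
    (hasDerivAt_const t β).div hcube (pow_ne_zero 3 (hne t))
  have hsq : HasDerivAt (fun s => 2 * (deriv y s * deriv y s))
      (2 * (b * deriv y t + deriv y t * b)) t := (hy't.mul hy't).const_mul 2
  have hrest : HasDerivAt (fun s => 2 * y s * (-(α * y s) - β / (y s) ^ 3))
      (2 * a' * (-(α * a) - β / a ^ 3)
        + 2 * a * (-(α * a') - (0 * a ^ 3 - β * (3 * a ^ 2 * a')) / (a ^ 3) ^ 2)) t :=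
    (hyt.const_mul 2).mul (((hyt.const_mul α).neg).sub hdiv)
  have htot := (hsq.fun_add hrest).deriv
  rw [htot]
  have hodet : b = -(α * a) - β / a ^ 3 := by have := hode t; linarith
  rw [hodet]
  have hane : a ≠ 0 := hne t
  field_simp
  ring
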